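/- In the deterministic MDP M(γ, ε, ℓ), fix k ≥ 1 and for each integer j let π_j be the stationary policy that takes right in state j and left in every other state (and left everywhere if j ≤ 1). Then the periodic non-stationary policy π_{k,ℓ} that cycles through π_k, π_{k−1}, …, π_{k−ℓ+1} has value at state k equal to v_{π_{k,ℓ}}(k) = r_k/(1 − γ^ℓ) = −2ε(γ − γ^k)/((1 − γ)(1 − γ^ℓ)): starting from k, the trajectory takes right once (reward r_k, landing in k + ℓ − 1), then takes left ℓ − 1 times back to k, and repeats this ℓ-step loop forever. -/
import Mathlib


/-- Actions of the deterministic MDP `M(γ, ε, ℓ)`. -/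
inductive Act where
  | left : Act
  | right : Act
deriving DecidableEq

/-- Deterministic transition: state `1` is absorbing; from `i ≥ 2`, `left` moves to `i - 1`
and `right` moves to `i + ℓ - 1`. -/
def nxt (ℓ : ℕ) (i : ℕ) (a : Act) : ℕ :=
  if i ≤ 1 then 1 else
    match a with
    | Act.left => i - 1
    | Act.right => i + ℓ - 1

/-- Reward: `0` in state `1` and for `left`; `r_i = −2ε(γ−γ^i)/(1−γ)` for `right` from `i ≥ 2`. -/
noncomputable def rew (γ ε : ℝ) (i : ℕ) (a : Act) : ℝ :=
  if i ≤ 1 then 0 else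
    match a with
    | Act.left => 0
    | Act.right => -2 * ε * (γ - γ ^ i) / (1 - γ)

/-- `r_i = −2ε(γ−γ^i)/(1−γ)`. -/
noncomputable def rr (γ ε : ℝ) (i : ℕ) : ℝ := -2 * ε * (γ - γ ^ i) / (1 - γ)

/-- Trajectory induced by a (possibly non-stationary) policy `σ` from state `s`. -/
def traj (ℓ : ℕ) (σ : ℕ → ℕ → Act) (s : ℕ) : ℕ → ℕ
  | 0 => s
  | (t+1) => nxt ℓ (traj ℓ σ s t) (σ t (traj ℓ σ s t))

/-- Discounted value of a (possibly non-stationary) policy `σ` from state `s`. -/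
noncomputable def val (γ ε : ℝ) (ℓ : ℕ) (σ : ℕ → ℕ → Act) (s : ℕ) : ℝ :=
  ∑' t : ℕ, γ ^ t * rew γ ε (traj ℓ σ s t) (σ t (traj ℓ σ s t))

/-- Bellman operator of a stationary policy `π`. -/
noncomputable def bellT (γ ε : ℝ) (ℓ : ℕ) (π : ℕ → Act) (v : ℕ → ℝ) : ℕ → ℝ :=
  fun i => rew γ ε i (π i) + γ * v (nxt ℓ i (π i))

/-- `π` is greedy with respect to `v`: `T_π v` is the pointwise max over the two actions. -/
noncomputable def IsGreedyD (γ ε : ℝ) (ℓ : ℕ) (π : ℕ → Act) (v : ℕ → ℝ) : Prop :=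
  ∀ i, bellT γ ε ℓ π v i =
    max (rew γ ε i Act.left + γ * v (nxt ℓ i Act.left))
        (rew γ ε i Act.right + γ * v (nxt ℓ i Act.right))

/-- Composed Bellman operator `T_{π_k} T_{π_{k-1}} ⋯ T_{π_{k-n+1}}`. -/
noncomputable def TcompD (γ ε : ℝ) (ℓ : ℕ) (π : ℤ → ℕ → Act) : ℕ → ℤ → (ℕ → ℝ) → (ℕ → ℝ)
  | 0, _ => id
  | (n+1), k => fun v => bellT γ ε ℓ (π k) (TcompD γ ε ℓ π n (k-1) v)

/-- The error terms used in the tightness construction. -/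
noncomputable def errf (ε : ℝ) (ℓ : ℕ) (k i : ℕ) : ℝ :=
  if i = k then -ε else if i = k + ℓ then ε else 0

/-- The periodic non-stationary policy `π_{k,ℓ}` looping over `π_k, π_{k-1}, …, π_{k-ℓ+1}`. -/
def periodic (ℓ : ℕ) (π : ℤ → ℕ → Act) (k : ℤ) : ℕ → ℕ → Act :=
  fun t => π (k - ((t % ℓ : ℕ) : ℤ))


private lemma traj_aux (ℓ : ℕ) (hℓ : 1 ≤ ℓ) (k : ℕ) (hk : 2 ≤ k)
    (π : ℤ → ℕ → Act)
    (hπ : ∀ (j : ℤ) (i : ℕ), π j i = if (i : ℤ) = j ∧ 2 ≤ j then Act.right else Act.left) :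
    ∀ t : ℕ, traj ℓ (periodic ℓ π (k : ℤ)) k t =
      if t % ℓ = 0 then k else k + ℓ - t % ℓ := by
  intro t
  induction t with
  | zero => simp [traj]
  | succ t ih =>
    have hm : t % ℓ < ℓ := Nat.mod_lt _ (by omega)
    have hstep : traj ℓ (periodic ℓ π (k : ℤ)) k (t+1)
        = nxt ℓ (traj ℓ (periodic ℓ π (k : ℤ)) k t)
            (periodic ℓ π (k : ℤ) t (traj ℓ (periodic ℓ π (k : ℤ)) k t)) := rfl
    rw [hstep, ih]
    rcases Nat.eq_zero_or_pos (t % ℓ) with h0 | hpos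
    · -- at state k, take right
      have hact : periodic ℓ π (k : ℤ) t k = Act.right := by
        simp [periodic, h0, hπ, show (2:ℤ) ≤ (k:ℤ) by exact_mod_cast hk]
      rw [if_pos h0, hact]
      have hnxt : nxt ℓ k Act.right = k + ℓ - 1 := by
        simp [nxt, show ¬ k ≤ 1 by omega]
      rw [hnxt]
      have : (t+1) % ℓ = 1 % ℓ := by
        rw [← Nat.mod_add_mod, h0, Nat.zero_add]
      rw [this]
      rcases eq_or_lt_of_le hℓ with h1 | h1
      · simp [← h1]
      · rw [Nat.mod_eq_of_lt h1]
        simp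
    · -- at state k + ℓ - t % ℓ, take left
      set m := t % ℓ with hmdef
      have hstate : ¬ (k + ℓ - m ≤ 1) := by omega
      have hact : periodic ℓ π (k : ℤ) t (k + ℓ - m) = Act.left := by
        simp only [periodic, hπ]
        rw [if_neg]
        rintro ⟨h1, -⟩
        have : ((k + ℓ - m : ℕ) : ℤ) = (k : ℤ) + ℓ - m := by
          push_cast [Nat.cast_sub (by omega : m ≤ k + ℓ)]; ring
        rw [this] at h1
        omega
      rw [if_neg (by omega), hact]
      have hnxt : nxt ℓ (k + ℓ - m) Act.left = k + ℓ - m - 1 := by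
        simp [nxt, hstate]
      rw [hnxt]
      have hmod : (t+1) % ℓ = (m + 1) % ℓ := (Nat.mod_add_mod t ℓ 1).symm
      rw [hmod]
      rcases eq_or_lt_of_le (by omega : m + 1 ≤ ℓ) with he | hlt
      · rw [he, Nat.mod_self, if_pos rfl]; omega
      · rw [Nat.mod_eq_of_lt hlt, if_neg (by omega)]; omega

private lemma rew_aux (γ ε : ℝ) (ℓ : ℕ) (hℓ : 1 ≤ ℓ) (k : ℕ) (hk : 2 ≤ k)
    (π : ℤ → ℕ → Act)
    (hπ : ∀ (j : ℤ) (i : ℕ), π j i = if (i : ℤ) = j ∧ 2 ≤ j then Act.right else Act.left) :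
    ∀ t : ℕ,
      rew γ ε (traj ℓ (periodic ℓ π (k : ℤ)) k t)
        (periodic ℓ π (k : ℤ) t (traj ℓ (periodic ℓ π (k : ℤ)) k t))
      = if t % ℓ = 0 then rr γ ε k else 0 := by
  intro t
  rw [traj_aux ℓ hℓ k hk π hπ t]
  rcases Nat.eq_zero_or_pos (t % ℓ) with h0 | hpos
  · have hact : periodic ℓ π (k : ℤ) t k = Act.right := by
      simp [periodic, h0, hπ, show (2:ℤ) ≤ (k:ℤ) by exact_mod_cast hk]
    rw [if_pos h0, if_pos h0, hact]
    simp [rew, rr, show ¬ k ≤ 1 by omega]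
  · have hm : t % ℓ < ℓ := Nat.mod_lt _ (by omega)
    set m := t % ℓ with hmdef
    have hact : periodic ℓ π (k : ℤ) t (k + ℓ - m) = Act.left := by
      simp only [periodic, hπ]
      rw [if_neg]
      rintro ⟨h1, -⟩
      have : ((k + ℓ - m : ℕ) : ℤ) = (k : ℤ) + ℓ - m := by
        push_cast [Nat.cast_sub (by omega : m ≤ k + ℓ)]; ring
      rw [this] at h1
      omega
    rw [if_neg (by omega), if_neg (by omega), hact]
    simp [rew]

private lemma tsum_period (γ : ℝ) (h0 : 0 ≤ γ) (h1 : γ < 1) (ℓ : ℕ) (hℓ : 1 ≤ ℓ) (c : ℝ) :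
    ∑' t : ℕ, γ ^ t * (if t % ℓ = 0 then c else 0) = c / (1 - γ ^ ℓ) := by
  have hinj : Function.Injective (fun n : ℕ => ℓ * n) := fun a b h => by
    simpa using Nat.eq_of_mul_eq_mul_left (by omega) h
  have hsupp : Function.support (fun t : ℕ => γ ^ t * (if t % ℓ = 0 then c else 0))
      ⊆ Set.range (fun n : ℕ => ℓ * n) := by
    intro x hx
    by_cases hd : x % ℓ = 0
    · exact ⟨x / ℓ, Nat.mul_div_cancel' (Nat.dvd_of_mod_eq_zero hd)⟩
    · simp [Function.mem_support, hd] at hx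
  have key := hinj.tsum_eq hsupp
  rw [← key]
  have hpow : γ ^ ℓ < 1 := pow_lt_one₀ h0 h1 (by omega)
  have hgeom : ∑' n : ℕ, (γ ^ ℓ) ^ n = (1 - γ ^ ℓ)⁻¹ :=
    tsum_geometric_of_lt_one (pow_nonneg h0 _) hpow
  calc ∑' n : ℕ, γ ^ (ℓ * n) * (if (ℓ * n) % ℓ = 0 then c else 0)
      = ∑' n : ℕ, (γ ^ ℓ) ^ n * c := by
        congr 1; funext n
        rw [Nat.mul_mod_right, if_pos rfl, pow_mul]
    _ = (∑' n : ℕ, (γ ^ ℓ) ^ n) * c := tsum_mul_right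
    _ = c / (1 - γ ^ ℓ) := by rw [hgeom]; rw [div_eq_inv_mul]

/-- In `M(γ, ε, ℓ)`, the periodic non-stationary policy `π_{k,ℓ}` built from the policies
`π_j` (taking right in state `j` only) loops on the `ℓ`-cycle through `k` and has value
`r_k/(1−γ^ℓ) = −2ε(γ−γ^k)/((1−γ)(1−γ^ℓ))` at state `k`. -/
theorem detMDP_periodic_policy_value
    (γ ε : ℝ) (hγ0 : 0 < γ) (hγ1 : γ < 1) (hε : 0 < ε) (ℓ : ℕ) (hℓ : 1 ≤ ℓ)
    (k : ℕ) (hk : 1 ≤ k)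
    (π : ℤ → ℕ → Act)
    (hπ : ∀ (j : ℤ) (i : ℕ), π j i = if (i : ℤ) = j ∧ 2 ≤ j then Act.right else Act.left) :
    (2 ≤ k → ∀ t : ℕ, traj ℓ (periodic ℓ π (k : ℤ)) k t =
      if t % ℓ = 0 then k else k + ℓ - t % ℓ) ∧
    val γ ε ℓ (periodic ℓ π (k : ℤ)) k = rew γ ε k Act.right / (1 - γ ^ ℓ) ∧
    val γ ε ℓ (periodic ℓ π (k : ℤ)) k = -2 * ε * (γ - γ ^ k) / ((1 - γ) * (1 - γ ^ ℓ)) := by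
  have hγℓ : γ ^ ℓ < 1 := pow_lt_one₀ hγ0.le hγ1 (by omega)
  have hne : (1 : ℝ) - γ ^ ℓ ≠ 0 := by nlinarith
  have hval : val γ ε ℓ (periodic ℓ π (k : ℤ)) k = rr γ ε k / (1 - γ ^ ℓ) := by
    rcases eq_or_lt_of_le hk with h1 | h2
    · -- k = 1 : everything is zero
      have hk1 : k = 1 := h1.symm
      subst hk1
      show val γ ε ℓ (periodic ℓ π (1 : ℤ)) 1 = rr γ ε 1 / (1 - γ ^ ℓ)
      have htraj : ∀ t : ℕ, traj ℓ (periodic ℓ π (1 : ℤ)) 1 t = 1 := by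
        intro t
        induction t with
        | zero => rfl
        | succ t ih =>
          have : traj ℓ (periodic ℓ π (1 : ℤ)) 1 (t+1)
              = nxt ℓ (traj ℓ (periodic ℓ π (1 : ℤ)) 1 t)
                  (periodic ℓ π (1 : ℤ) t (traj ℓ (periodic ℓ π (1 : ℤ)) 1 t)) := rfl
          rw [this, ih]; simp [nxt]
      have : val γ ε ℓ (periodic ℓ π (1 : ℤ)) 1 = 0 := by
        unfold val
        convert tsum_zero with t
        rw [htraj t]
        simp [rew]
      rw [this, rr]
      simp
    · -- k ≥ 2
      have hk2 : 2 ≤ k := h2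
      unfold val
      have := rew_aux γ ε ℓ hℓ k hk2 π hπ
      calc ∑' t : ℕ, γ ^ t * rew γ ε (traj ℓ (periodic ℓ π (k : ℤ)) k t)
              (periodic ℓ π (k : ℤ) t (traj ℓ (periodic ℓ π (k : ℤ)) k t))
          = ∑' t : ℕ, γ ^ t * (if t % ℓ = 0 then rr γ ε k else 0) := by
            congr 1; funext t; rw [this t]
        _ = rr γ ε k / (1 - γ ^ ℓ) := tsum_period γ hγ0.le hγ1 ℓ hℓ _
  have hrew : rew γ ε k Act.right = rr γ ε k := by
    rcases eq_or_lt_of_le hk with h1 | h2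
    · have : k = 1 := h1.symm
      subst this
      simp [rew, rr]
    · simp [rew, rr, show ¬ k ≤ 1 by omega]
  refine ⟨fun hk2 => traj_aux ℓ hℓ k hk2 π hπ, by rw [hval, hrew], ?_⟩
  rw [hval, rr, div_div]
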